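/- Let D be a convex domain in ℝ^d, let x₀ ∈ D and R₀ > 0 be such that the closed ball cl(B(x₀, R₀)) ⊆ D, and let R ≥ R₀. Then the bounded convex domain D_R = D ∩ B(x₀, R) satisfies condition (B) with δ = R₀/2 and β = (1 + (2R/R₀)²)^{1/2}. -/
import Mathlib


open MeasureTheory ProbabilityTheory Set RealInnerProductSpace

noncomputable section

/-- `d`-dimensional Euclidean space. -/
abbrev Euc (d : ℕ) := EuclideanSpace ℝ (Fin d)

/-- The set `N_{x,r}` of inward unit normal vectors at `x` with radius `r`:
`{n : ‖n‖ = 1, B(x - r n, r) ∩ D = ∅}`. -/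
def normalSet {d : ℕ} (D : Set (Euc d)) (x : Euc d) (r : ℝ) : Set (Euc d) :=
  {n | ‖n‖ = 1 ∧ Metric.ball (x - r • n) r ∩ D = ∅}

/-- The set `N_x = ⋃_{r>0} N_{x,r}` of inward unit normal vectors at `x`. -/
def normalCone {d : ℕ} (D : Set (Euc d)) (x : Euc d) : Set (Euc d) :=
  ⋃ r > 0, normalSet D x r

/-- Condition (B) with constants `δ`, `β`. -/
def CondB {d : ℕ} (D : Set (Euc d)) (δ β : ℝ) : Prop :=
  ∀ x ∈ frontier D, ∃ l : Euc d, ‖l‖ = 1 ∧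
    ∀ y ∈ Metric.ball x δ ∩ frontier D, ∀ n ∈ normalCone D y, 1 / β ≤ ⟪l, n⟫

/-- if `D` is a convex domain, `cl(B(x₀,R₀)) ⊆ D` with `R₀ > 0` and `R ≥ R₀`,
then the bounded convex domain `D_R = D ∩ B(x₀,R)` satisfies condition (B) with
`δ = R₀/2` and `β = (1 + (2R/R₀)²)^{1/2}`. -/
theorem stmt4 {d : ℕ} (D : Set (Euc d)) (hDopen : IsOpen D) (hDne : D.Nonempty)
    (hDconv : Convex ℝ D) (x₀ : Euc d) (hx₀ : x₀ ∈ D) (R₀ R : ℝ) (hR₀ : 0 < R₀)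
    (hball : Metric.closedBall x₀ R₀ ⊆ D) (hR : R₀ ≤ R) :
    CondB (D ∩ Metric.ball x₀ R) (R₀ / 2) (Real.sqrt (1 + (2 * R / R₀) ^ 2)) := by
  have hRpos : 0 < R := lt_of_lt_of_le hR₀ hR
  set β := Real.sqrt (1 + (2 * R / R₀) ^ 2) with hβdef
  have hβge : 2 * R / R₀ ≤ β := by
    rw [hβdef]
    calc 2 * R / R₀ = Real.sqrt ((2 * R / R₀) ^ 2) := (Real.sqrt_sq (by positivity)).symm
      _ ≤ _ := Real.sqrt_le_sqrt (by nlinarith)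
  have hβpos : 0 < β := lt_of_lt_of_le (by positivity) hβge
  set DR := D ∩ Metric.ball x₀ R with hDRdef
  have hDRopen : IsOpen DR := hDopen.inter Metric.isOpen_ball
  have hDRconv : Convex ℝ DR := hDconv.inter (convex_ball x₀ R)
  have hx₀R : x₀ ∈ DR := ⟨hx₀, Metric.mem_ball_self hRpos⟩
  have hfr : ∀ w, w ∈ frontier DR → w ∉ DR := by
    intro w hw
    rw [hDRopen.frontier_eq] at hw
    exact hw.2
  -- separation: inward normal gives supporting half-space
  have hsep : ∀ y ∈ frontier DR, ∀ n ∈ normalCone DR y, ∀ z ∈ DR, 0 ≤ ⟪n, z - y⟫ := by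
    intro y hy n hn z hz
    obtain ⟨r, hr, hn1, hbal⟩ : ∃ r, 0 < r ∧ ‖n‖ = 1 ∧ Metric.ball (y - r • n) r ∩ DR = ∅ := by
      simp only [normalCone, mem_iUnion] at hn
      obtain ⟨r, hr, hmem⟩ := hn
      exact ⟨r, hr, hmem.1, hmem.2⟩
    by_contra hneg
    push_neg at hneg
    set c := -⟪n, z - y⟫ with hc
    have hcpos : 0 < c := by rw [hc]; linarith
    have hzy : z ≠ y := fun h => hfr y hy (h ▸ hz)
    have hzy0 : z - y ≠ 0 := sub_ne_zero.mpr hzy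
    have hzy2 : 0 < ‖z - y‖ ^ 2 := pow_pos (norm_pos_iff.mpr hzy0) 2
    set t := min 1 (r * c / ‖z - y‖ ^ 2) with ht
    have htpos : 0 < t := lt_min one_pos (div_pos (mul_pos hr hcpos) hzy2)
    have ht1 : t ≤ 1 := min_le_left _ _
    have htle : t * ‖z - y‖ ^ 2 ≤ r * c := by
      have h := min_le_right 1 (r * c / ‖z - y‖ ^ 2)
      calc t * ‖z - y‖ ^ 2 ≤ (r * c / ‖z - y‖ ^ 2) * ‖z - y‖ ^ 2 :=
            mul_le_mul_of_nonneg_right h (le_of_lt hzy2)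
        _ = r * c := div_mul_cancel₀ _ (ne_of_gt hzy2)
    have hp : (1 - t) • y + t • z ∈ DR := by
      have := hDRconv.combo_closure_interior_mem_interior
        (frontier_subset_closure hy) (by rw [hDRopen.interior_eq]; exact hz)
        (by linarith : (0:ℝ) ≤ 1 - t) htpos (by ring)
      rwa [hDRopen.interior_eq] at this
    have hpball : (1 - t) • y + t • z ∈ Metric.ball (y - r • n) r := by
      rw [Metric.mem_ball, dist_eq_norm]
      have hvec : (1 - t) • y + t • z - (y - r • n) = t • (z - y) + r • n := by
        module
      rw [hvec]
      have hexp : ‖t • (z - y) + r • n‖ ^ 2 =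
          t ^ 2 * ‖z - y‖ ^ 2 - 2 * t * r * c + r ^ 2 := by
        rw [norm_add_sq_real, norm_smul, norm_smul, real_inner_smul_left,
          real_inner_smul_right, real_inner_comm]
        have : ⟪n, z - y⟫ = -c := by rw [hc]; ring
        rw [this, Real.norm_eq_abs, Real.norm_eq_abs, abs_of_pos htpos, abs_of_pos hr, hn1]
        ring
      have hlt : ‖t • (z - y) + r • n‖ ^ 2 < r ^ 2 := by
        rw [hexp]
        nlinarith [mul_le_mul_of_nonneg_left htle htpos.le, mul_pos (mul_pos htpos hr) hcpos]
      exact lt_of_pow_lt_pow_left₀ 2 hr.le hlt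
    exact absurd (Set.mem_inter hpball hp) (by rw [hbal]; exact notMem_empty _)
  -- main argument
  intro x hx
  have hxnot : x ∉ DR := hfr x hx
  have hxne : x₀ - x ≠ 0 := fun h => hxnot (by rwa [sub_eq_zero.mp h] at hx₀R)
  have hxnorm : 0 < ‖x₀ - x‖ := norm_pos_iff.mpr hxne
  have hxR : ‖x₀ - x‖ ≤ R := by
    have hxcl : x ∈ closure DR := frontier_subset_closure hx
    have h1 : closure DR ⊆ Metric.closedBall x₀ R :=
      closure_minimal (inter_subset_right.trans Metric.ball_subset_closedBall)
        Metric.isClosed_closedBall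
    have h2 := h1 hxcl
    rw [Metric.mem_closedBall] at h2
    rw [← dist_eq_norm, dist_comm]
    exact h2
  refine ⟨‖x₀ - x‖⁻¹ • (x₀ - x), ?_, ?_⟩
  · rw [norm_smul, Real.norm_eq_abs, abs_of_pos (inv_pos.mpr hxnorm),
      inv_mul_cancel₀ (ne_of_gt hxnorm)]
  · rintro y ⟨hyball, hyfr⟩ n hn
    have hsep' := hsep y hyfr n hn
    obtain ⟨r, hr, hn1, -⟩ : ∃ r, 0 < r ∧ ‖n‖ = 1 ∧ Metric.ball (y - r • n) r ∩ DR = ∅ := by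
      simp only [normalCone, mem_iUnion] at hn
      obtain ⟨r, hr, hmem⟩ := hn
      exact ⟨r, hr, hmem.1, hmem.2⟩
    -- ⟪n, x₀ - y⟫ ≥ R₀
    have hkey : R₀ ≤ ⟪n, x₀ - y⟫ := by
      have hstep : ∀ s : ℝ, 0 < s → s < R₀ → s ≤ ⟪n, x₀ - y⟫ := by
        intro s hs hsR
        have hmem : x₀ - s • n ∈ DR := by
          constructor
          · apply hball
            rw [Metric.mem_closedBall, dist_eq_norm]
            simp only [sub_sub_cancel_left]
            rw [norm_neg, norm_smul, hn1, Real.norm_eq_abs, abs_of_pos hs, mul_one]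
            linarith
          · rw [Metric.mem_ball, dist_eq_norm]
            simp only [sub_sub_cancel_left]
            rw [norm_neg, norm_smul, hn1, Real.norm_eq_abs, abs_of_pos hs, mul_one]
            linarith
        have h0 := hsep' (x₀ - s • n) hmem
        have hvec : x₀ - s • n - y = (x₀ - y) - s • n := by module
        rw [hvec, inner_sub_right, real_inner_smul_right, real_inner_self_eq_norm_sq, hn1] at h0
        nlinarith
      refine le_of_forall_lt fun e he => ?_
      have h1 : (max e 0 + R₀) / 2 < R₀ := by
        have : max e 0 < R₀ := max_lt he hR₀
        linarith
      have h2 : 0 < (max e 0 + R₀) / 2 := by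
        have : (0:ℝ) ≤ max e 0 := le_max_right _ _
        linarith
      have h3 := hstep _ h2 h1
      have h4 : e ≤ max e 0 := le_max_left _ _
      linarith
    -- ⟪n, y - x⟫ ≥ -R₀/2
    have hyx : ‖y - x‖ < R₀ / 2 := by
      rw [Metric.mem_ball, dist_eq_norm] at hyball
      exact hyball
    have hcs : -(R₀ / 2) ≤ ⟪n, y - x⟫ := by
      have h1 := abs_real_inner_le_norm n (y - x)
      rw [hn1, one_mul] at h1
      have := neg_abs_le ⟪n, y - x⟫
      have h2 := abs_le.mp h1
      linarith [h2.1]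
    have hfin : R₀ / 2 ≤ ⟪n, x₀ - x⟫ := by
      have hvec : x₀ - x = (x₀ - y) + (y - x) := by module
      rw [hvec, inner_add_right]
      linarith
    rw [real_inner_smul_left]
    have hβinv : 1 / β ≤ R₀ / (2 * R) := by
      rw [div_le_div_iff₀ hβpos (by positivity)]
      calc 1 * (2 * R) = (2 * R / R₀) * R₀ := by field_simp
        _ ≤ β * R₀ := mul_le_mul_of_nonneg_right hβge hR₀.le
        _ = R₀ * β := mul_comm _ _
    have hstep2 : R₀ / (2 * R) ≤ ‖x₀ - x‖⁻¹ * ⟪x₀ - x, n⟫ := by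
      rw [real_inner_comm]
      have h1 : R⁻¹ ≤ ‖x₀ - x‖⁻¹ := inv_anti₀ hxnorm hxR
      calc R₀ / (2 * R) = R⁻¹ * (R₀ / 2) := by rw [inv_mul_eq_div, div_div]
        _ ≤ ‖x₀ - x‖⁻¹ * (R₀ / 2) := mul_le_mul_of_nonneg_right h1 (by positivity)
        _ ≤ ‖x₀ - x‖⁻¹ * ⟪n, x₀ - x⟫ :=
            mul_le_mul_of_nonneg_left hfin (inv_nonneg.mpr hxnorm.le)
    linarith

end
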